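/- Under the empirical framework with informed weights, assume Pg = 0, that Σ = Var_P(g) = P(ggᵀ) is positive definite, and that there exists ε > 0 with E‖g(X_1)‖^{4+ε} < ∞. Then, almost surely, there exists N such that for all n ≥ N one has p_i > 0 for every i ∈ {1,…,n}; in particular, almost surely for all n sufficiently large, ℙ_n^I = ∑_{i=1}^n p_i δ_{X_i} is a probability measure. -/

import Mathlib

open MeasureTheory ProbabilityTheory Filter Matrix Topology

lemma aux_abs_pow_le (x : ℝ) {a : ℕ} (ha : a ≤ 4) : |x ^ a| ≤ 1 + x ^ 4 := by
  have hx4 : x ^ 4 = |x| ^ 4 := by rw [← abs_pow]; rw [abs_of_nonneg (by positivity)]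
  rw [abs_pow, hx4]
  rcases le_total |x| 1 with h | h
  · have h1 : |x| ^ a ≤ 1 := pow_le_one₀ (abs_nonneg x) h
    nlinarith [pow_nonneg (abs_nonneg x) 4]
  · have h1 : |x| ^ a ≤ |x| ^ 4 := pow_le_pow_right₀ h ha
    nlinarith

lemma aux_rpow_le (t : ℝ) (ht : 0 ≤ t) {c d : ℝ} (hc : 0 ≤ c) (hcd : c ≤ d) :
    t ^ c ≤ 1 + t ^ d := by
  rcases le_total t 1 with h | h
  · have h1 : t ^ c ≤ 1 := Real.rpow_le_one ht h hc
    have h2 : (0:ℝ) ≤ t ^ d := Real.rpow_nonneg ht d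
    linarith
  · have h1 : t ^ c ≤ t ^ d := Real.rpow_le_rpow_of_exponent_le h hcd
    have h2 : (0:ℝ) ≤ t ^ c := Real.rpow_nonneg ht c
    linarith

lemma aux_dot_bound {m : ℕ} (u v : Fin m → ℝ) (B : Matrix (Fin m) (Fin m) ℝ) {U V : ℝ}
    (hU0 : 0 ≤ U) (hV0 : 0 ≤ V) (hU : ∀ j, |u j| ≤ U) (hV : ∀ k, |v k| ≤ V) :
    |u ⬝ᵥ B *ᵥ v| ≤ (∑ j, ∑ k, |B j k|) * U * V := by
  have h1 : |u ⬝ᵥ B *ᵥ v| ≤ ∑ j, |u j * (B *ᵥ v) j| := by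
    simpa [dotProduct] using Finset.abs_sum_le_sum_abs (fun j => u j * (B *ᵥ v) j) Finset.univ
  have h2 : ∀ j : Fin m, |u j * (B *ᵥ v) j| ≤ (∑ k, |B j k|) * U * V := by
    intro j
    have h3 : |(B *ᵥ v) j| ≤ ∑ k, |B j k| * V := by
      have hmv : (B *ᵥ v) j = ∑ k, B j k * v k := rfl
      rw [hmv]
      refine le_trans (Finset.abs_sum_le_sum_abs _ _) (Finset.sum_le_sum fun k _ => ?_)
      rw [abs_mul]
      exact mul_le_mul_of_nonneg_left (hV k) (abs_nonneg _)
    rw [abs_mul]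
    calc |u j| * |(B *ᵥ v) j| ≤ U * (∑ k, |B j k| * V) :=
          mul_le_mul (hU j) h3 (abs_nonneg _) hU0
      _ = (∑ k, |B j k|) * U * V := by rw [← Finset.sum_mul]; ring
  calc |u ⬝ᵥ B *ᵥ v| ≤ ∑ j, |u j * (B *ᵥ v) j| := h1
    _ ≤ ∑ j : Fin m, (∑ k, |B j k|) * U * V := Finset.sum_le_sum fun j _ => h2 j
    _ = (∑ j, ∑ k, |B j k|) * U * V := by rw [← Finset.sum_mul, ← Finset.sum_mul]
lemma aux_moment4 {Ω : Type*} [MeasurableSpace Ω] {μ : Measure Ω} [IsProbabilityMeasure μ]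
    (Y : ℕ → Ω → ℝ) (hmeas : ∀ i, Measurable (Y i))
    (hindep : iIndepFun Y μ)
    (M : ℝ) (hM : 1 ≤ M)
    (hint : ∀ i, Integrable (fun ω => (Y i ω) ^ 4) μ)
    (hmean : ∀ i, ∫ ω, Y i ω ∂μ = 0)
    (h2 : ∀ i, ∫ ω, (Y i ω) ^ 2 ∂μ ≤ M)
    (h4 : ∀ i, ∫ ω, (Y i ω) ^ 4 ∂μ ≤ M) :
    ∀ n : ℕ, Integrable (fun ω => (∑ i ∈ Finset.range n, Y i ω) ^ 4) μ ∧
      (∫ ω, (∑ i ∈ Finset.range n, Y i ω) ∂μ = 0) ∧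
      (∫ ω, (∑ i ∈ Finset.range n, Y i ω) ^ 2 ∂μ ≤ n * M) ∧
      (∫ ω, (∑ i ∈ Finset.range n, Y i ω) ^ 4 ∂μ ≤ 7 * M ^ 2 * n ^ 2) := by
  -- basic facts about single variables
  have hSmeas : ∀ n : ℕ, Measurable (fun ω => ∑ i ∈ Finset.range n, Y i ω) := by
    intro n; exact Finset.measurable_sum _ fun i _ => hmeas i
  -- integrability of powers k ≤ 4 from integrability of the 4th power
  have hpow_int : ∀ (f : Ω → ℝ), Measurable f → Integrable (fun ω => (f ω) ^ 4) μ →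
      ∀ (k : ℕ), k ≤ 4 → Integrable (fun ω => (f ω) ^ k) μ := by
    intro f hf hf4 k hk
    refine Integrable.mono' ((integrable_const 1).add hf4) ((hf.pow_const k).aestronglyMeasurable)
      (Filter.Eventually.of_forall fun ω => ?_)
    simpa using aux_abs_pow_le (f ω) hk
  intro n
  induction n with
  | zero => simp
  | succ n ih =>
    obtain ⟨ihint, ihmean, ih2, ih4⟩ := ih
    set S : Ω → ℝ := fun ω => ∑ i ∈ Finset.range n, Y i ω with hS
    have hSm : Measurable S := hSmeas n
    have hYm : Measurable (Y n) := hmeas n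
    have hSint : ∀ k : ℕ, k ≤ 4 → Integrable (fun ω => (S ω) ^ k) μ :=
      hpow_int S hSm ihint
    have hYint : ∀ k : ℕ, k ≤ 4 → Integrable (fun ω => (Y n ω) ^ k) μ :=
      hpow_int (Y n) hYm (hint n)
    -- independence of S and Y n
    have hSY : IndepFun S (Y n) μ := by
      have h := hindep.indepFun_sum_range_succ hmeas n
      have e : S = ∑ j ∈ Finset.range n, Y j := by
        funext ω; simp [hS, Finset.sum_apply]
      rw [e]; exact h
    have hSYk : ∀ k l : ℕ, IndepFun (fun ω => (S ω) ^ k) (fun ω => (Y n ω) ^ l) μ := by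
      intro k l
      exact hSY.comp (measurable_id.pow_const k) (measurable_id.pow_const l)
    have hmulint : ∀ k l : ℕ, k ≤ 4 → l ≤ 4 →
        Integrable (fun ω => (S ω) ^ k * (Y n ω) ^ l) μ := by
      intro k l hk hl
      exact (hSYk k l).integrable_mul (hSint k hk) (hYint l hl)
    have hmul : ∀ k l : ℕ, k ≤ 4 → l ≤ 4 →
        ∫ ω, (S ω) ^ k * (Y n ω) ^ l ∂μ =
          (∫ ω, (S ω) ^ k ∂μ) * ∫ ω, (Y n ω) ^ l ∂μ := by
      intro k l hk hl
      exact (hSYk k l).integral_fun_mul_eq_mul_integral (hSint k hk).aestronglyMeasurable (hYint l hl).aestronglyMeasurable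
    have hYmean : ∫ ω, Y n ω ∂μ = 0 := hmean n
    have hY2nonneg : 0 ≤ ∫ ω, (Y n ω) ^ 2 ∂μ := integral_nonneg fun ω => by positivity
    have hS2nonneg : 0 ≤ ∫ ω, (S ω) ^ 2 ∂μ := integral_nonneg fun ω => by positivity
    -- expansion of the new sum
    have hsum : ∀ ω, ∑ i ∈ Finset.range (n + 1), Y i ω = S ω + Y n ω := by
      intro ω; rw [Finset.sum_range_succ]
    constructor
    · -- integrability of the 4th power
      have : Integrable (fun ω => (S ω) ^ 4 + 4 * ((S ω) ^ 3 * (Y n ω) ^ 1)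
          + 6 * ((S ω) ^ 2 * (Y n ω) ^ 2) + 4 * ((S ω) ^ 1 * (Y n ω) ^ 3)
          + (Y n ω) ^ 4) μ := by
        exact ((((hSint 4 le_rfl).add ((hmulint 3 1 (by norm_num) (by norm_num)).const_mul 4)).add
          ((hmulint 2 2 (by norm_num) (by norm_num)).const_mul 6)).add
          ((hmulint 1 3 (by norm_num) (by norm_num)).const_mul 4)).add (hYint 4 le_rfl)
      refine this.congr (Filter.Eventually.of_forall fun ω => ?_)
      dsimp only
      rw [hsum ω]; ring
    have hint1 : Integrable S μ := by
      have := hSint 1 (by norm_num); simpa using this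
    have hintY1 : Integrable (Y n) μ := by
      have := hYint 1 (by norm_num); simpa using this
    refine ⟨?_, ?_, ?_⟩
    · -- mean zero
      have : ∫ ω, (S ω + Y n ω) ∂μ = (∫ ω, S ω ∂μ) + ∫ ω, Y n ω ∂μ :=
        integral_add hint1 hintY1
      rw [show (fun ω => ∑ i ∈ Finset.range (n+1), Y i ω) = fun ω => S ω + Y n ω from
        funext hsum]
      rw [this, ihmean, hYmean]; ring
    · -- second moment
      have hexp : ∫ ω, (∑ i ∈ Finset.range (n+1), Y i ω) ^ 2 ∂μ =
          (∫ ω, (S ω) ^ 2 ∂μ) + 2 * ((∫ ω, (S ω) ^ 1 ∂μ) * ∫ ω, (Y n ω) ^ 1 ∂μ)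
            + ∫ ω, (Y n ω) ^ 2 ∂μ := by
        have e1 : (fun ω => (∑ i ∈ Finset.range (n+1), Y i ω) ^ 2)
            = fun ω => (S ω) ^ 2 + 2 * ((S ω) ^ 1 * (Y n ω) ^ 1) + (Y n ω) ^ 2 := by
          funext ω; rw [hsum ω]; ring
        have i1 : Integrable (fun ω => (S ω) ^ 2) μ := hSint 2 (by norm_num)
        have i2 : Integrable (fun ω => 2 * ((S ω) ^ 1 * (Y n ω) ^ 1)) μ :=
          (hmulint 1 1 (by norm_num) (by norm_num)).const_mul 2
        have i12 : Integrable (fun ω => (S ω) ^ 2 + 2 * ((S ω) ^ 1 * (Y n ω) ^ 1)) μ :=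
          i1.add i2
        have i3 : Integrable (fun ω => (Y n ω) ^ 2) μ := hYint 2 (by norm_num)
        rw [e1, integral_add i12 i3, integral_add i1 i2, integral_const_mul,
          hmul 1 1 (by norm_num) (by norm_num)]
      rw [hexp]
      have hY1 : ∫ ω, (Y n ω) ^ 1 ∂μ = 0 := by simpa using hYmean
      rw [hY1]
      have := h2 n
      push_cast
      nlinarith
    · -- fourth moment
      have hexp : ∫ ω, (∑ i ∈ Finset.range (n+1), Y i ω) ^ 4 ∂μ =
          (∫ ω, (S ω) ^ 4 ∂μ)
          + 4 * ((∫ ω, (S ω) ^ 3 ∂μ) * ∫ ω, (Y n ω) ^ 1 ∂μ)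
          + 6 * ((∫ ω, (S ω) ^ 2 ∂μ) * ∫ ω, (Y n ω) ^ 2 ∂μ)
          + 4 * ((∫ ω, (S ω) ^ 1 ∂μ) * ∫ ω, (Y n ω) ^ 3 ∂μ)
          + ∫ ω, (Y n ω) ^ 4 ∂μ := by
        have e1 : (fun ω => (∑ i ∈ Finset.range (n+1), Y i ω) ^ 4)
            = fun ω => (S ω) ^ 4 + 4 * ((S ω) ^ 3 * (Y n ω) ^ 1)
              + 6 * ((S ω) ^ 2 * (Y n ω) ^ 2) + 4 * ((S ω) ^ 1 * (Y n ω) ^ 3)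
              + (Y n ω) ^ 4 := by
          funext ω; rw [hsum ω]; ring
        rw [e1]
        have i1 : Integrable (fun ω => (S ω) ^ 4) μ := hSint 4 le_rfl
        have i2 : Integrable (fun ω => 4 * ((S ω) ^ 3 * (Y n ω) ^ 1)) μ :=
          (hmulint 3 1 (by norm_num) (by norm_num)).const_mul (4:ℝ)
        have i3 : Integrable (fun ω => 6 * ((S ω) ^ 2 * (Y n ω) ^ 2)) μ :=
          (hmulint 2 2 (by norm_num) (by norm_num)).const_mul (6:ℝ)
        have i4 : Integrable (fun ω => 4 * ((S ω) ^ 1 * (Y n ω) ^ 3)) μ :=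
          (hmulint 1 3 (by norm_num) (by norm_num)).const_mul (4:ℝ)
        have i5 : Integrable (fun ω => (Y n ω) ^ 4) μ := hYint 4 le_rfl
        have i12 : Integrable (fun ω => (S ω) ^ 4 + 4 * ((S ω) ^ 3 * (Y n ω) ^ 1)) μ := i1.add i2
        have i123 : Integrable (fun ω => (S ω) ^ 4 + 4 * ((S ω) ^ 3 * (Y n ω) ^ 1)
            + 6 * ((S ω) ^ 2 * (Y n ω) ^ 2)) μ := i12.add i3
        have i1234 : Integrable (fun ω => (S ω) ^ 4 + 4 * ((S ω) ^ 3 * (Y n ω) ^ 1)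
            + 6 * ((S ω) ^ 2 * (Y n ω) ^ 2) + 4 * ((S ω) ^ 1 * (Y n ω) ^ 3)) μ := i123.add i4
        rw [integral_add i1234 i5, integral_add i123 i4, integral_add i12 i3,
          integral_add i1 i2, integral_const_mul, integral_const_mul, integral_const_mul,
          hmul 3 1 (by norm_num) (by norm_num), hmul 2 2 (by norm_num) (by norm_num),
          hmul 1 3 (by norm_num) (by norm_num)]
      rw [hexp]
      have hY1 : ∫ ω, (Y n ω) ^ 1 ∂μ = 0 := by simpa using hYmean
      have hS1 : ∫ ω, (S ω) ^ 1 ∂μ = 0 := by simpa using ihmean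
      rw [hY1, hS1]
      have hY2 := h2 n
      have hY4 := h4 n
      have hM2 : (1:ℝ) ≤ M ^ 2 := by nlinarith
      push_cast
      nlinarith [ih2, ih4, hS2nonneg, hY2nonneg, mul_le_mul ih2 hY2 hY2nonneg
        (by positivity : (0:ℝ) ≤ (n:ℝ) * M)]
lemma aux_bc {Ω : Type*} [MeasurableSpace Ω] {μ : Measure Ω} [IsProbabilityMeasure μ]
    (f : ℕ → Ω → ℝ) (hint : ∀ n, Integrable (f n) μ)
    (hnn : ∀ n ω, 0 ≤ f n ω) (c : ℕ → ℝ) (hc : ∀ n, 0 < c n)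
    (hsum : Summable (fun n => (∫ ω, f n ω ∂μ) / c n)) :
    ∀ᵐ ω ∂μ, ∀ᶠ n in atTop, f n ω < c n := by
  set s : ℕ → Set Ω := fun n => {ω | c n ≤ f n ω} with hs
  have hbound : ∀ n, μ (s n) ≤ ENNReal.ofReal ((∫ ω, f n ω ∂μ) / c n) := by
    intro n
    have h1 := mul_meas_ge_le_integral_of_nonneg
      (Filter.Eventually.of_forall (hnn n)) (hint n) (c n)
    have h2 : (μ (s n)).toReal ≤ (∫ ω, f n ω ∂μ) / c n := by
      rw [le_div_iff₀ (hc n)]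
      calc (μ (s n)).toReal * c n = c n * (μ (s n)).toReal := mul_comm _ _
        _ ≤ _ := h1
    calc μ (s n) = ENNReal.ofReal ((μ (s n)).toReal) := by
          rw [ENNReal.ofReal_toReal (measure_ne_top μ _)]
      _ ≤ ENNReal.ofReal ((∫ ω, f n ω ∂μ) / c n) := ENNReal.ofReal_le_ofReal h2
  have hne : (∑' n, μ (s n)) ≠ ⊤ := by
    have hnn' : ∀ n, 0 ≤ (∫ ω, f n ω ∂μ) / c n := fun n =>
      div_nonneg (integral_nonneg (hnn n)) (hc n).le
    have h3 : (∑' n, μ (s n)) ≤ ∑' n, ENNReal.ofReal ((∫ ω, f n ω ∂μ) / c n) :=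
      ENNReal.tsum_le_tsum hbound
    have h4 : (∑' n, ENNReal.ofReal ((∫ ω, f n ω ∂μ) / c n)) =
        ENNReal.ofReal (∑' n, (∫ ω, f n ω ∂μ) / c n) :=
      (ENNReal.ofReal_tsum_of_nonneg hnn' hsum).symm
    exact ne_top_of_le_ne_top (by rw [h4]; exact ENNReal.ofReal_ne_top) h3
  filter_upwards [ae_eventually_notMem hne] with ω hω
  filter_upwards [hω] with n hn
  exact lt_of_not_ge hn

lemma aux_pow_le_rpow (t : ℝ) (ht : 0 ≤ t) (k : ℕ) {d : ℝ} (hk : (k : ℝ) ≤ d) :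
    t ^ k ≤ 1 + t ^ d := by
  rw [← Real.rpow_natCast t k]
  exact aux_rpow_le t ht (by positivity) hk

lemma aux_summable (C r : ℝ) (hr : 1 < r) :
    Summable (fun n : ℕ => C / ((n : ℝ) + 1) ^ r) := by
  have h1 : Summable (fun n : ℕ => (((n : ℝ)) ^ r)⁻¹) := Real.summable_nat_rpow_inv.2 hr
  have h2 : Summable (fun n : ℕ => ((((n : ℕ) + 1 : ℕ) : ℝ) ^ r)⁻¹) :=
    (_root_.summable_nat_add_iff 1).2 h1
  have h3 : Summable (fun n : ℕ => (((n : ℝ) + 1) ^ r)⁻¹) := by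
    refine h2.congr fun n => ?_
    push_cast
    ring_nf
  simpa [div_eq_mul_inv] using h3.mul_left C
set_option maxHeartbeats 1000000 in
theorem stmt12 {Ω 𝓧 : Type*} [MeasurableSpace Ω] [MeasurableSpace 𝓧]
    (μ : Measure Ω) [IsProbabilityMeasure μ]
    (P : Measure 𝓧) [IsProbabilityMeasure P]
    (m : ℕ) (hm : 0 < m)
    (X : ℕ → Ω → 𝓧) (hXmeas : ∀ i, Measurable (X i))
    (hXid : ∀ i, Measure.map (X i) μ = P)
    (hXindep : iIndepFun X μ)
    (g : 𝓧 → Fin m → ℝ) (hgmeas : ∀ j, Measurable fun x => g x j)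
    (hPg : ∀ j, (∫ x, g x j ∂P) = 0)
    (Sig : Matrix (Fin m) (Fin m) ℝ)
    (hSig : ∀ j k, Sig j k = ∫ x, g x j * g x k ∂P)
    (hposdef : Sig.PosDef)
    (ε : ℝ) (hε : 0 < ε)
    (hmom : Integrable (fun x => Real.sqrt (∑ j, g x j ^ 2) ^ ((4 : ℝ) + ε)) P)
    (Png : ℕ → Ω → Fin m → ℝ)
    (hPng : ∀ n ω j, Png n ω j = (n : ℝ)⁻¹ * ∑ i ∈ Finset.range n, g (X i ω) j)
    (Sign : ℕ → Ω → Matrix (Fin m) (Fin m) ℝ)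
    (hSign : ∀ n ω j k, Sign n ω j k =
      (n : ℝ)⁻¹ * (∑ i ∈ Finset.range n, g (X i ω) j * g (X i ω) k)
        - Png n ω j * Png n ω k)
    (p : ℕ → Ω → ℕ → ℝ)
    (hp : ∀ n ω i, p n ω i = (n : ℝ)⁻¹ *
      (1 - g (X i ω) ⬝ᵥ ((Sign n ω)⁻¹ *ᵥ Png n ω)
        + Png n ω ⬝ᵥ ((Sign n ω)⁻¹ *ᵥ Png n ω))) :
    ∀ᵐ ω ∂μ, ∃ N : ℕ, ∀ n ≥ N,
      IsUnit (Sign n ω).det ∧ ∀ i < n, 0 < p n ω i := by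
  classical
  -- the Euclidean norm of `g`
  set h : 𝓧 → ℝ := fun x => Real.sqrt (∑ j, g x j ^ 2) with hh
  have hh0 : ∀ x, 0 ≤ h x := fun x => Real.sqrt_nonneg _
  have hhg : ∀ x j, |g x j| ≤ h x := by
    intro x j
    rw [hh, ← Real.sqrt_sq_eq_abs]
    exact Real.sqrt_le_sqrt (Finset.single_le_sum
      (f := fun j => g x j ^ 2) (fun j _ => by positivity) (Finset.mem_univ j))
  have hhmeas : Measurable h :=
    (Finset.measurable_sum Finset.univ fun j _ => (hgmeas j).pow_const 2).sqrt
  set q : ℝ := 4 + ε with hq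
  have hq0 : 0 < q := by rw [hq]; linarith
  have hq4 : (4 : ℝ) ≤ q := by rw [hq]; linarith
  have hmom' : Integrable (fun x => h x ^ q) P := hmom
  have hint1q : Integrable (fun x => 1 + h x ^ q) P := (integrable_const 1).add hmom'
  set M : ℝ := 1 + ∫ x, h x ^ q ∂P with hMdef
  have hM1 : (1 : ℝ) ≤ M :=
    le_add_of_nonneg_right (integral_nonneg fun x => Real.rpow_nonneg (hh0 x) q)
  -- transfer lemma
  have key : ∀ φ : 𝓧 → ℝ, Measurable φ → (∀ x, |φ x| ≤ 1 + h x ^ q) →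
      Integrable φ P ∧ (∀ i, Integrable (fun ω => φ (X i ω)) μ) ∧
      (∀ i, ∫ ω, φ (X i ω) ∂μ = ∫ x, φ x ∂P) ∧ (∫ x, φ x ∂P ≤ M) := by
    intro φ hφm hφb
    have hφP : Integrable φ P :=
      hint1q.mono' hφm.aestronglyMeasurable
        (Filter.Eventually.of_forall fun x => by
          simpa using hφb x)
    refine ⟨hφP, fun i => ?_, fun i => ?_, ?_⟩
    · have h1 : Integrable φ (Measure.map (X i) μ) := by rw [hXid i]; exact hφP
      rw [integrable_map_measure hφm.aestronglyMeasurable (hXmeas i).aemeasurable] at h1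
      exact h1
    · rw [← hXid i, integral_map (hXmeas i).aemeasurable hφm.aestronglyMeasurable]
    · calc ∫ x, φ x ∂P ≤ ∫ x, (1 + h x ^ q) ∂P :=
            integral_mono hφP hint1q fun x => (le_abs_self _).trans (hφb x)
        _ = M := by
            rw [integral_add (integrable_const 1) hmom', integral_const]
            simp [hMdef]
  -- strong law of large numbers for functions of the sample
  have slln : ∀ φ : 𝓧 → ℝ, Measurable φ → (∀ x, |φ x| ≤ 1 + h x ^ q) →
      ∀ᵐ ω ∂μ, Tendsto (fun n => (∑ i ∈ Finset.range n, φ (X i ω)) / n)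
        atTop (𝓝 (∫ x, φ x ∂P)) := by
    intro φ hφm hφb
    obtain ⟨hφP, hint, hval, _⟩ := key φ hφm hφb
    have hindep : iIndepFun (fun i => φ ∘ X i) μ :=
      hXindep.comp (fun _ => φ) fun _ => hφm
    have hident : ∀ i, IdentDistrib (φ ∘ X i) (φ ∘ X 0) μ μ := by
      intro i
      refine ⟨(hφm.comp (hXmeas i)).aemeasurable, (hφm.comp (hXmeas 0)).aemeasurable, ?_⟩
      rw [← Measure.map_map hφm (hXmeas i), ← Measure.map_map hφm (hXmeas 0), hXid, hXid]
    have hsl := strong_law_ae_real (fun i => φ ∘ X i) (hint 0)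
      (fun i j hij => hindep.indepFun hij) hident
    have hval0 : ∫ ω, (φ ∘ X 0) ω ∂μ = ∫ x, φ x ∂P := hval 0
    rw [hval0] at hsl
    exact hsl
  -- exponents
  set a : ℝ := (1 / q + 1 / 4) / 2 with hadef
  set b : ℝ := (a + 1 / 4) / 2 with hbdef
  have ha0 : 0 < a := by
    have : 0 < 1 / q := by positivity
    rw [hadef]; linarith
  have ha4 : a < 1 / 4 := by
    have h1 : 1 / q < 1 / 4 := by
      apply one_div_lt_one_div_of_lt <;> linarith
    rw [hadef]; linarith
  have hab : a < b := by rw [hbdef]; linarith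
  have hb4 : b < 1 / 4 := by rw [hbdef]; linarith
  have hb0 : 0 < b := by rw [hbdef]; linarith
  have haq : 1 < a * q := by
    have : a * q = (1 + q / 4) / 2 := by
      rw [hadef]; field_simp
    rw [this, hq]; linarith
  -- per-component variables and their moments
  have hYb1 : ∀ j x, |g x j| ≤ 1 + h x ^ q := by
    intro j x
    refine (hhg x j).trans ?_
    have := aux_pow_le_rpow (h x) (hh0 x) 1 (d := q) (by rw [hq]; push_cast; linarith)
    simpa using this
  have hYb2 : ∀ j k x, |g x j * g x k| ≤ 1 + h x ^ q := by
    intro j k x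
    have h1 : |g x j * g x k| ≤ h x ^ 2 := by
      rw [abs_mul, sq]
      exact mul_le_mul (hhg x j) (hhg x k) (abs_nonneg _) (hh0 x)
    exact h1.trans (aux_pow_le_rpow (h x) (hh0 x) 2 (by rw [hq]; push_cast; linarith))
  have hYb4 : ∀ j x, |(g x j) ^ 4| ≤ 1 + h x ^ q := by
    intro j x
    have h1 : |(g x j) ^ 4| ≤ h x ^ 4 := by
      rw [abs_pow]
      exact pow_le_pow_left₀ (abs_nonneg _) (hhg x j) 4
    exact h1.trans (aux_pow_le_rpow (h x) (hh0 x) 4 (by rw [hq]; push_cast; linarith))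
  have hYbsq : ∀ j x, |(g x j) ^ 2| ≤ 1 + h x ^ q := by
    intro j x
    have h1 : |(g x j) ^ 2| ≤ h x ^ 2 := by
      rw [abs_pow]
      exact pow_le_pow_left₀ (abs_nonneg _) (hhg x j) 2
    exact h1.trans (aux_pow_le_rpow (h x) (hh0 x) 2 (by rw [hq]; push_cast; linarith))
  -- fourth moment bound for sums of each component
  have hmom4 : ∀ j : Fin m, ∀ n : ℕ,
      Integrable (fun ω => (∑ i ∈ Finset.range n, g (X i ω) j) ^ 4) μ ∧
      ∫ ω, (∑ i ∈ Finset.range n, g (X i ω) j) ^ 4 ∂μ ≤ 7 * M ^ 2 * n ^ 2 := by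
    intro j
    have key1 := key (fun x => g x j) (hgmeas j) (hYb1 j)
    have key2 := key (fun x => (g x j) ^ 2) ((hgmeas j).pow_const 2) (hYbsq j)
    have key4 := key (fun x => (g x j) ^ 4) ((hgmeas j).pow_const 4) (hYb4 j)
    have hres := aux_moment4 (fun i ω => g (X i ω) j)
      (fun i => (hgmeas j).comp (hXmeas i))
      (hXindep.comp (fun _ => fun x => g x j) fun _ => hgmeas j)
      M hM1
      (fun i => key4.2.1 i)
      (fun i => by rw [key1.2.2.1 i, hPg j])
      (fun i => by rw [key2.2.2.1 i]; exact key2.2.2.2)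
      (fun i => by rw [key4.2.2.1 i]; exact key4.2.2.2)
    exact fun n => ⟨(hres n).1, (hres n).2.2.2⟩
  -- Borel–Cantelli II: rate for the empirical means
  have hBC2 : ∀ j : Fin m, ∀ᵐ ω ∂μ, ∀ᶠ n in atTop,
      |∑ i ∈ Finset.range n, g (X i ω) j| < ((n : ℝ) + 1) ^ (1 - b) := by
    intro j
    have hc : ∀ n : ℕ, 0 < (((n : ℝ) + 1) ^ (1 - b)) ^ 4 := by
      intro n
      have : (0:ℝ) < ((n : ℝ) + 1) ^ (1 - b) := Real.rpow_pos_of_pos (by positivity) _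
      positivity
    have hbc := aux_bc (fun n ω => (∑ i ∈ Finset.range n, g (X i ω) j) ^ 4)
      (fun n => (hmom4 j n).1)
      (fun n ω => by positivity)
      (fun n => (((n : ℝ) + 1) ^ (1 - b)) ^ 4)
      hc ?_
    · filter_upwards [hbc] with ω hω
      filter_upwards [hω] with n hn
      by_contra hcon
      push_neg at hcon
      have h1 : (((n : ℝ) + 1) ^ (1 - b)) ^ 4 ≤ (∑ i ∈ Finset.range n, g (X i ω) j) ^ 4 := by
        calc (((n : ℝ) + 1) ^ (1 - b)) ^ 4 ≤ |∑ i ∈ Finset.range n, g (X i ω) j| ^ 4 :=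
              pow_le_pow_left₀ (Real.rpow_nonneg (by positivity) _) hcon 4
          _ = (∑ i ∈ Finset.range n, g (X i ω) j) ^ 4 := by
              rw [← abs_pow, abs_of_nonneg (by positivity)]
      exact absurd hn (not_lt.2 h1)
    · -- summability
      refine Summable.of_nonneg_of_le
        (fun n => div_nonneg (integral_nonneg fun ω => by positivity) (hc n).le)
        (fun n => ?_)
        (aux_summable (7 * M ^ 2) (2 - 4 * b) (by linarith))
      have hpos : (0:ℝ) < (n : ℝ) + 1 := by positivity
      have hA : (0:ℝ) < ((n : ℝ) + 1) ^ (2 - 4 * b) := Real.rpow_pos_of_pos hpos _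
      rw [div_le_div_iff₀ (hc n) hA]
      have hintle := (hmom4 j n).2
      have e3 : (((n:ℝ) + 1) ^ (1 - b)) ^ 4 = ((n:ℝ) + 1) ^ (2 - 4*b) * ((n:ℝ) + 1) ^ (2:ℕ) := by
        rw [← Real.rpow_natCast (((n:ℝ) + 1) ^ (1 - b)) 4, ← Real.rpow_mul hpos.le,
          ← Real.rpow_natCast ((n:ℝ) + 1) 2, ← Real.rpow_add hpos]
        norm_num
        ring_nf
      have e5 : (n:ℝ) ^ 2 ≤ ((n:ℝ) + 1) ^ 2 := by nlinarith [Nat.cast_nonneg (α := ℝ) n]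
      calc (∫ ω, (∑ i ∈ Finset.range n, g (X i ω) j) ^ 4 ∂μ) * ((n:ℝ) + 1) ^ (2 - 4*b)
          ≤ (7 * M ^ 2 * (n:ℝ) ^ 2) * ((n:ℝ) + 1) ^ (2 - 4*b) :=
            mul_le_mul_of_nonneg_right hintle hA.le
        _ ≤ (7 * M ^ 2 * ((n:ℝ) + 1) ^ 2) * ((n:ℝ) + 1) ^ (2 - 4*b) :=
            mul_le_mul_of_nonneg_right
              (mul_le_mul_of_nonneg_left e5 (by positivity)) hA.le
        _ = 7 * M ^ 2 * ((((n:ℝ) + 1) ^ (1 - b)) ^ 4) := by rw [e3]; ring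
  -- Borel–Cantelli I: control of the maximum of ‖g(Xᵢ)‖
  have hBC1 : ∀ᵐ ω ∂μ, ∀ᶠ i in atTop, h (X i ω) < ((i : ℝ) + 1) ^ a := by
    have hc : ∀ i : ℕ, 0 < ((((i : ℝ) + 1) ^ a) ^ q) := fun i =>
      Real.rpow_pos_of_pos (Real.rpow_pos_of_pos (by positivity) _) _
    have hbq : ∀ x, |h x ^ q| ≤ 1 + h x ^ q := fun x => by
      rw [abs_of_nonneg (Real.rpow_nonneg (hh0 x) q)]
      linarith [Real.rpow_nonneg (hh0 x) q]
    have hmq : Measurable fun x => h x ^ q :=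
      (Real.continuous_rpow_const hq0.le).measurable.comp hhmeas
    obtain ⟨hqP, hqint, hqval, hqle⟩ := key (fun x => h x ^ q) hmq hbq
    have hbc := aux_bc (fun i ω => h (X i ω) ^ q)
      (fun i => hqint i)
      (fun i ω => Real.rpow_nonneg (hh0 _) q)
      (fun i => (((i : ℝ) + 1) ^ a) ^ q) hc ?_
    · filter_upwards [hbc] with ω hω
      filter_upwards [hω] with i hi
      by_contra hcon
      push_neg at hcon
      have : (((i : ℝ) + 1) ^ a) ^ q ≤ h (X i ω) ^ q :=
        Real.rpow_le_rpow (Real.rpow_nonneg (by positivity) _) hcon hq0.le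
      exact absurd hi (not_lt.2 this)
    · refine Summable.of_nonneg_of_le
        (fun i => div_nonneg (integral_nonneg fun ω => Real.rpow_nonneg (hh0 _) q) (hc i).le)
        (fun i => ?_) (aux_summable M (a * q) haq)
      have hval : ∫ ω, h (X i ω) ^ q ∂μ ≤ M := (hqval i).le.trans hqle
      have he : (((i : ℝ) + 1) ^ a) ^ q = ((i : ℝ) + 1) ^ (a * q) :=
        (Real.rpow_mul (by positivity) a q).symm
      have hcpos : (0:ℝ) < ((i : ℝ) + 1) ^ (a * q) :=
        Real.rpow_pos_of_pos (by positivity) _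
      calc (∫ ω, h (X i ω) ^ q ∂μ) / ((((i : ℝ) + 1) ^ a) ^ q)
          = (∫ ω, h (X i ω) ^ q ∂μ) / (((i : ℝ) + 1) ^ (a * q)) := by rw [he]
        _ ≤ M / (((i : ℝ) + 1) ^ (a * q)) := by gcongr
  -- SLLN for the second empirical moments
  have ESLLN : ∀ᵐ ω ∂μ, ∀ jk : Fin m × Fin m,
      Tendsto (fun n => (∑ i ∈ Finset.range n, g (X i ω) jk.1 * g (X i ω) jk.2) / n)
        atTop (𝓝 (∫ x, g x jk.1 * g x jk.2 ∂P)) := by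
    rw [ae_all_iff]
    intro jk
    exact slln _ ((hgmeas jk.1).mul (hgmeas jk.2)) (hYb2 jk.1 jk.2)
  have EBC2 : ∀ᵐ ω ∂μ, ∀ j : Fin m, ∀ᶠ n in atTop,
      |∑ i ∈ Finset.range n, g (X i ω) j| < ((n : ℝ) + 1) ^ (1 - b) := ae_all_iff.2 hBC2
  filter_upwards [ESLLN, EBC2, hBC1] with ω hS hB2 hB1
  -- rate for the empirical mean
  have HV : ∀ᶠ n in atTop, ∀ j : Fin m, |Png n ω j| ≤ 2 * (n : ℝ) ^ (-b) := by
    have hall : ∀ᶠ n in atTop, ∀ j : Fin m,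
        |∑ i ∈ Finset.range n, g (X i ω) j| < ((n : ℝ) + 1) ^ (1 - b) := eventually_all.2 hB2
    filter_upwards [hall, eventually_ge_atTop 1] with n hn hn1 j
    have hn1' : (1:ℝ) ≤ (n:ℝ) := by exact_mod_cast hn1
    have hnpos : (0:ℝ) < n := by linarith
    rw [hPng n ω j, abs_mul, abs_inv, abs_of_nonneg (le_of_lt hnpos)]
    have h1 : ((n:ℝ) + 1) ^ (1 - b) ≤ 2 * (n:ℝ) ^ (1 - b) := by
      have h2 : ((n:ℝ) + 1) ≤ 2 * (n:ℝ) := by linarith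
      calc ((n:ℝ) + 1) ^ (1 - b) ≤ (2 * (n:ℝ)) ^ (1 - b) :=
            Real.rpow_le_rpow (by positivity) h2 (by linarith)
        _ = 2 ^ (1 - b) * (n:ℝ) ^ (1 - b) := Real.mul_rpow (by norm_num) (by positivity)
        _ ≤ 2 * (n:ℝ) ^ (1 - b) := by
            have h3 : (2:ℝ) ^ (1 - b) ≤ 2 ^ (1:ℝ) :=
              Real.rpow_le_rpow_of_exponent_le (by norm_num) (by linarith)
            rw [Real.rpow_one] at h3
            have h4 : (0:ℝ) ≤ (n:ℝ) ^ (1 - b) := Real.rpow_nonneg (by positivity) _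
            nlinarith
    have h4 : (n:ℝ)⁻¹ * |∑ i ∈ Finset.range n, g (X i ω) j|
        ≤ (n:ℝ)⁻¹ * (2 * (n:ℝ) ^ (1 - b)) :=
      mul_le_mul_of_nonneg_left ((hn j).le.trans h1) (by positivity)
    refine h4.trans (le_of_eq ?_)
    have e : (-1:ℝ) + (1 - b) = -b := by ring
    calc (n:ℝ)⁻¹ * (2 * (n:ℝ) ^ (1 - b)) = 2 * ((n:ℝ) ^ (-1:ℝ) * (n:ℝ) ^ (1 - b)) := by
          rw [Real.rpow_neg_one]; ring
      _ = 2 * (n:ℝ) ^ (-b) := by rw [← Real.rpow_add hnpos, e]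
  have htend2 : Tendsto (fun n : ℕ => 2 * (n:ℝ) ^ (-b)) atTop (𝓝 0) := by
    have h1 := (tendsto_rpow_neg_atTop hb0).comp (tendsto_natCast_atTop_atTop (R := ℝ))
    have h2 := h1.const_mul (2:ℝ)
    simpa using h2
  have hPng0 : ∀ j, Tendsto (fun n => Png n ω j) atTop (𝓝 0) := by
    intro j
    apply squeeze_zero_norm' ?_ htend2
    filter_upwards [HV] with n hn
    simpa [Real.norm_eq_abs] using hn j
  -- convergence of the empirical covariance matrices
  have hSconv : Tendsto (fun n => Sign n ω) atTop (𝓝 Sig) := by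
    have hentry : ∀ j k, Tendsto (fun n => Sign n ω j k) atTop (𝓝 (Sig j k)) := by
      intro j k
      have h1 := hS (j, k)
      have h2 := h1.sub ((hPng0 j).mul (hPng0 k))
      have h3 : Tendsto (fun n => Sign n ω j k) atTop
          (𝓝 ((∫ x, g x j * g x k ∂P) - 0 * 0)) := by
        refine h2.congr fun n => ?_
        rw [hSign n ω j k, inv_mul_eq_div]
      rw [hSig j k]
      simpa using h3
    exact tendsto_pi_nhds.2 fun j => tendsto_pi_nhds.2 fun k => hentry j k
  have hdet : Tendsto (fun n => (Sign n ω).det) atTop (𝓝 Sig.det) :=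
    ((Continuous.matrix_det continuous_id).tendsto Sig).comp hSconv
  have hdetne : Sig.det ≠ 0 := ne_of_gt hposdef.det_pos
  have HU : ∀ᶠ n in atTop, IsUnit (Sign n ω).det := by
    filter_upwards [hdet.eventually_ne hdetne] with n hn
    exact isUnit_iff_ne_zero.2 hn
  -- convergence of the inverses
  have hinv : Tendsto (fun n => (Sign n ω)⁻¹) atTop (𝓝 Sig⁻¹) := by
    have hc : ContinuousAt Inv.inv Sig :=
      continuousAt_matrix_inv Sig (NormedRing.inverse_continuousAt (Units.mk0 Sig.det hdetne))
    exact hc.tendsto.comp hSconv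
  have HK0 : Tendsto (fun n => ∑ j, ∑ k, |((Sign n ω)⁻¹) j k|) atTop
      (𝓝 (∑ j, ∑ k, |Sig⁻¹ j k|)) := by
    refine tendsto_finset_sum _ fun j _ => tendsto_finset_sum _ fun k _ => ?_
    exact (tendsto_pi_nhds.1 (tendsto_pi_nhds.1 hinv j) k).abs
  set K : ℝ := (∑ j, ∑ k, |Sig⁻¹ j k|) + 1 with hKdef
  have hKs : (0:ℝ) ≤ ∑ j, ∑ k, |Sig⁻¹ j k| :=
    Finset.sum_nonneg fun j _ => Finset.sum_nonneg fun k _ => abs_nonneg _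
  have hK0 : 0 < K := by rw [hKdef]; linarith
  have HK : ∀ᶠ n in atTop, (∑ j, ∑ k, |((Sign n ω)⁻¹) j k|) ≤ K := by
    have := HK0.eventually_lt_const (lt_add_one (∑ j, ∑ k, |Sig⁻¹ j k|))
    filter_upwards [this] with n hn
    exact hn.le
  -- bound for the maximum of the data points
  obtain ⟨I, hI⟩ := eventually_atTop.1 hB1
  set D : ℝ := ∑ i ∈ Finset.range I, h (X i ω) with hDdef
  have hD0 : 0 ≤ D := Finset.sum_nonneg fun i _ => hh0 _
  have HDb : ∀ n : ℕ, ∀ i < n, ∀ j, |g (X i ω) j| ≤ D + (n:ℝ) ^ a := by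
    intro n i hin j
    have hna : (0:ℝ) ≤ (n:ℝ) ^ a := Real.rpow_nonneg (by positivity) _
    rcases lt_or_ge i I with hiI | hiI
    · have hle : h (X i ω) ≤ D :=
        Finset.single_le_sum (f := fun i => h (X i ω)) (fun i _ => hh0 _)
          (Finset.mem_range.2 hiI)
      linarith [hhg (X i ω) j]
    · have h1 : h (X i ω) < ((i:ℝ) + 1) ^ a := hI i hiI
      have hcast : ((i:ℝ) + 1) ≤ (n:ℝ) := by exact_mod_cast hin
      have h2 : ((i:ℝ) + 1) ^ a ≤ (n:ℝ) ^ a :=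
        Real.rpow_le_rpow (by positivity) hcast ha0.le
      linarith [hhg (X i ω) j]
  -- smallness of the two correction terms
  have hT1 : Tendsto (fun n : ℕ => K * (D + (n:ℝ) ^ a) * (2 * (n:ℝ) ^ (-b))) atTop (𝓝 0) := by
    have e : (fun n : ℕ => K * 2 * D * (n:ℝ) ^ (-b) + K * 2 * (n:ℝ) ^ (a - b))
        =ᶠ[atTop] (fun n : ℕ => K * (D + (n:ℝ) ^ a) * (2 * (n:ℝ) ^ (-b))) := by
      filter_upwards [eventually_ge_atTop 1] with n hn
      have hnpos : (0:ℝ) < n := by exact_mod_cast hn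
      have hmulpow : (n:ℝ) ^ a * (n:ℝ) ^ (-b) = (n:ℝ) ^ (a - b) := by
        rw [← Real.rpow_add hnpos]; ring_nf
      rw [← hmulpow]; ring
    have t1 : Tendsto (fun n : ℕ => (n:ℝ) ^ (-b)) atTop (𝓝 0) :=
      (tendsto_rpow_neg_atTop hb0).comp tendsto_natCast_atTop_atTop
    have t2 : Tendsto (fun n : ℕ => (n:ℝ) ^ (a - b)) atTop (𝓝 0) := by
      have he : a - b = -(b - a) := by ring
      rw [he]
      exact (tendsto_rpow_neg_atTop (by linarith)).comp tendsto_natCast_atTop_atTop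
    have t3 := (t1.const_mul (K * 2 * D)).add (t2.const_mul (K * 2))
    have t4 := t3.congr' e
    simpa using t4
  have HT1 : ∀ᶠ n : ℕ in atTop, K * (D + (n:ℝ) ^ a) * (2 * (n:ℝ) ^ (-b)) < 4⁻¹ :=
    hT1.eventually_lt_const (by norm_num)
  have hT2 : Tendsto (fun n : ℕ => K * (2 * (n:ℝ) ^ (-b)) * (2 * (n:ℝ) ^ (-b))) atTop (𝓝 0) := by
    have := (htend2.const_mul K).mul htend2
    simpa using this
  have HT2 : ∀ᶠ n : ℕ in atTop, K * (2 * (n:ℝ) ^ (-b)) * (2 * (n:ℝ) ^ (-b)) < 4⁻¹ :=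
    hT2.eventually_lt_const (by norm_num)
  -- conclusion
  have HF : ∀ᶠ n in atTop, IsUnit (Sign n ω).det ∧ ∀ i < n, 0 < p n ω i := by
    filter_upwards [HU, HK, HV, HT1, HT2, eventually_ge_atTop 1] with n hu hk hv ht1 ht2 hn1
    refine ⟨hu, fun i hi => ?_⟩
    have hnpos : (0:ℝ) < n := by exact_mod_cast hn1
    have hna : (0:ℝ) ≤ (n:ℝ) ^ a := Real.rpow_nonneg (by positivity) _
    have hU0 : (0:ℝ) ≤ D + (n:ℝ) ^ a := by linarith
    have hV0' : (0:ℝ) ≤ 2 * (n:ℝ) ^ (-b) := by positivity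
    have hb1 := aux_dot_bound (g (X i ω)) (Png n ω) ((Sign n ω)⁻¹) hU0 hV0'
      (fun j => HDb n i hi j) hv
    have hb2 := aux_dot_bound (Png n ω) (Png n ω) ((Sign n ω)⁻¹) hV0' hV0' hv hv
    have hT1' : |g (X i ω) ⬝ᵥ ((Sign n ω)⁻¹ *ᵥ Png n ω)| < 4⁻¹ := by
      calc |g (X i ω) ⬝ᵥ ((Sign n ω)⁻¹ *ᵥ Png n ω)|
          ≤ (∑ j, ∑ k, |((Sign n ω)⁻¹) j k|) * (D + (n:ℝ) ^ a) * (2 * (n:ℝ) ^ (-b)) := hb1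
        _ ≤ K * (D + (n:ℝ) ^ a) * (2 * (n:ℝ) ^ (-b)) :=
            mul_le_mul_of_nonneg_right (mul_le_mul_of_nonneg_right hk hU0) hV0'
        _ < 4⁻¹ := ht1
    have hT2' : |Png n ω ⬝ᵥ ((Sign n ω)⁻¹ *ᵥ Png n ω)| < 4⁻¹ := by
      calc |Png n ω ⬝ᵥ ((Sign n ω)⁻¹ *ᵥ Png n ω)|
          ≤ (∑ j, ∑ k, |((Sign n ω)⁻¹) j k|) * (2 * (n:ℝ) ^ (-b)) * (2 * (n:ℝ) ^ (-b)) := hb2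
        _ ≤ K * (2 * (n:ℝ) ^ (-b)) * (2 * (n:ℝ) ^ (-b)) :=
            mul_le_mul_of_nonneg_right (mul_le_mul_of_nonneg_right hk hV0') hV0'
        _ < 4⁻¹ := ht2
    rw [hp n ω i]
    have hinner : 0 < 1 - g (X i ω) ⬝ᵥ ((Sign n ω)⁻¹ *ᵥ Png n ω)
        + Png n ω ⬝ᵥ ((Sign n ω)⁻¹ *ᵥ Png n ω) := by
      have ha1 := abs_lt.1 hT1'
      have ha2 := abs_lt.1 hT2'
      have : (4:ℝ)⁻¹ = 1/4 := by norm_num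
      linarith [ha1.1, ha1.2, ha2.1, ha2.2]
    exact mul_pos (by positivity) hinner
  obtain ⟨N, hN⟩ := eventually_atTop.1 HF
  exact ⟨N, fun n hn => hN n hn⟩
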